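/- For k = ⌊√n⌋ (n a sufficiently large perfect square for simplicity), the cyclically invariant function f defined by cyclic occurrence of the pattern g satisfies s⁰(f)·s¹(f) = Θ(√n), giving a cyclically invariant function where the product of 0-sensitivity and 1-sensitivity is Θ(√n) rather than Ω(n). -/

import Mathlib

/-- Flip the `i`-th bit of `x`. -/
def flipBit {n : ℕ} (x : Fin n → Bool) (i : Fin n) : Fin n → Bool :=
  fun j => if j = i then !x j else x j

/-- Flip all bits of `x` in the block `B`. -/
def flipSet {n : ℕ} (x : Fin n → Bool) (B : Finset (Fin n)) : Fin n → Bool :=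
  fun j => if j ∈ B then !x j else x j

/-- Sensitivity of `f` at the input `x`. -/
def sensAt {n : ℕ} (f : (Fin n → Bool) → Bool) (x : Fin n → Bool) : ℕ :=
  (Finset.univ.filter fun i => f (flipBit x i) ≠ f x).card

/-- Sensitivity of `f`. -/
def sens {n : ℕ} (f : (Fin n → Bool) → Bool) : ℕ :=
  Finset.univ.sup fun x => sensAt f x

/-- 0-sensitivity of `f`: max sensitivity over inputs where `f` is 0. -/
def sens0 {n : ℕ} (f : (Fin n → Bool) → Bool) : ℕ :=
  (Finset.univ.filter fun x => f x = false).sup fun x => sensAt f x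

/-- 1-sensitivity of `f`: max sensitivity over inputs where `f` is 1. -/
def sens1 {n : ℕ} (f : (Fin n → Bool) → Bool) : ℕ :=
  (Finset.univ.filter fun x => f x = true).sup fun x => sensAt f x

/-- Block sensitivity of `f` at `x`: the largest number of pairwise disjoint
nonempty blocks each of whose flips changes the value of `f` at `x`. -/
noncomputable def bsensAt {n : ℕ} (f : (Fin n → Bool) → Bool) (x : Fin n → Bool) : ℕ :=
  sSup {r : ℕ | ∃ B : Fin r → Finset (Fin n),
    (∀ j, (B j).Nonempty ∧ f (flipSet x (B j)) ≠ f x) ∧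
    ∀ j j', j ≠ j' → Disjoint (B j) (B j')}

/-- Block sensitivity of `f`. -/
noncomputable def bsens {n : ℕ} (f : (Fin n → Bool) → Bool) : ℕ :=
  Finset.univ.sup fun x => bsensAt f x

/-- The pattern predicate defining `g : {0,1}^{k²} → {0,1}`, reading a word as
`k` blocks of length `k`: block 1 equals `110^{k-2}`, the first five bits of
blocks `2..k` are 1, and the last three bits of block `k` are 1. -/
def GPat (k : ℕ) (z : ℕ → Bool) : Prop :=
  (∀ t < k, z t = decide (t < 2)) ∧
  (∀ j, 1 ≤ j → j < k → ∀ t < 5, z (j * k + t) = true) ∧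
  (∀ t, k - 3 ≤ t → t < k → z ((k - 1) * k + t) = true)

open Classical in
/-- The cyclically invariant function `f : {0,1}^n → {0,1}` with
`f(x) = 1` iff `x`, viewed cyclically, contains a contiguous length-`k²`
substring on which `g` evaluates to 1. -/
noncomputable def cycPatFn (k n : ℕ) (hn : 0 < n) : (Fin n → Bool) → Bool :=
  fun x => decide (∃ ℓ : ℕ, GPat k (fun t => x ⟨(ℓ + t) % n, Nat.mod_lt _ hn⟩))

/-! ### Auxiliary definitions and lemmas -/

/-- Boolean pattern value at (absolute) position `m` of the length-`n` pattern. -/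
def patB (k n m : ℕ) : Bool :=
  decide (m < 2 ∨ (k ≤ m ∧ m % k < 5) ∨ (n - 3 ≤ m ∧ m < n))

/-- The set of constrained positions of the pattern. -/
def inD (k n m : ℕ) : Prop :=
  m < n ∧ (m < k ∨ m % k < 5 ∨ n - 3 ≤ m)

instance inD_dec (k n : ℕ) : DecidablePred (inD k n) := fun m =>
  decidable_of_iff (m < n ∧ (m < k ∨ m % k < 5 ∨ n - 3 ≤ m)) Iff.rfl

/-- `x` matches the pattern shifted by `ℓ` on all constrained positions. -/
def matchesAt (k : ℕ) {n : ℕ} (hn : 0 < n) (x : Fin n → Bool) (ℓ : ℕ) : Prop :=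
  ∀ m, inD k n m → x ⟨(ℓ + m) % n, Nat.mod_lt _ hn⟩ = patB k n m

/-- `x` matches the pattern shifted by `ℓ` except at exactly one constrained
position, which is `i`, of pattern-index `m₀`. -/
def MStruct (k : ℕ) {n : ℕ} (hn : 0 < n) (x : Fin n → Bool) (ℓ m₀ : ℕ) (i : Fin n) : Prop :=
  inD k n m₀ ∧ (ℓ + m₀) % n = i.val ∧ x i = !(patB k n m₀) ∧
    ∀ m, inD k n m → m ≠ m₀ → x ⟨(ℓ + m) % n, Nat.mod_lt _ hn⟩ = patB k n m

/-- A conflict position between the pattern and its shift by `d`. -/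
def Conf (k n d m : ℕ) : Prop :=
  inD k n m ∧ inD k n ((m + d) % n) ∧ patB k n m ≠ patB k n ((m + d) % n)

lemma patB_true_small {k n m : ℕ} (h : m < 2) : patB k n m = true := by
  simp only [patB, decide_eq_true_eq]; exact Or.inl h

lemma patB_true_big {k n m : ℕ} (hk : k ≤ m) (h5 : m % k < 5) : patB k n m = true := by
  simp only [patB, decide_eq_true_eq]; exact Or.inr (Or.inl ⟨hk, h5⟩)

lemma patB_true_tail {k n m : ℕ} (h1 : n - 3 ≤ m) (h2 : m < n) : patB k n m = true := by
  simp only [patB, decide_eq_true_eq]; exact Or.inr (Or.inr ⟨h1, h2⟩)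

lemma patB_false_mid {k n m : ℕ} (h8 : 8 ≤ k) (hnk : n = k * k) (h2 : 2 ≤ m) (hm : m < k) :
    patB k n m = false := by
  have h8k : 8 * k ≤ n := hnk ▸ Nat.mul_le_mul_right k h8
  simp only [patB, decide_eq_false_iff_not]
  rintro (h | ⟨h, _⟩ | ⟨h, _⟩) <;> omega

lemma patB_of_lt {k n m : ℕ} (h8 : 8 ≤ k) (hnk : n = k * k) (hm : m < k) :
    patB k n m = decide (m < 2) := by
  by_cases h : m < 2
  · rw [patB_true_small h, decide_eq_true h]
  · rw [patB_false_mid h8 hnk (by omega) hm]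
    simp [h]

lemma inD_of_patB {k n m : ℕ} (h8 : 8 ≤ k) (hnk : n = k * k) (hm : m < n)
    (hp : patB k n m = true) : inD k n m := by
  simp only [patB, decide_eq_true_eq] at hp
  refine ⟨hm, ?_⟩
  rcases hp with h | ⟨h, h'⟩ | ⟨h, h'⟩
  · exact Or.inl (by omega)
  · exact Or.inr (Or.inl h')
  · exact Or.inr (Or.inr h)

lemma add_mod_cancel_left' {n : ℕ} (hn : 0 < n) {ℓ a b : ℕ} (ha : a < n) (hb : b < n)
    (h : (ℓ + a) % n = (ℓ + b) % n) : a = b := by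
  have h2 : Nat.ModEq n a b := Nat.ModEq.add_left_cancel' ℓ h
  simpa [Nat.ModEq, Nat.mod_eq_of_lt ha, Nat.mod_eq_of_lt hb] using h2

lemma add_mod_cancel_right' {n : ℕ} (hn : 0 < n) {a b c : ℕ} (ha : a < n) (hb : b < n)
    (h : (a + c) % n = (b + c) % n) : a = b := by
  have h2 : Nat.ModEq n a b := Nat.ModEq.add_right_cancel' c h
  simpa [Nat.ModEq, Nat.mod_eq_of_lt ha, Nat.mod_eq_of_lt hb] using h2

lemma mod_eq_wrap {n m d r : ℕ} (h : m + d = n + r) (hr : r < n) : (m + d) % n = r := by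
  rw [h, Nat.add_mod_left]
  exact Nat.mod_eq_of_lt hr
lemma gpat_iff {k n : ℕ} (h8 : 8 ≤ k) (hnk : n = k * k) (hn : 0 < n)
    (x : Fin n → Bool) (ℓ : ℕ) :
    GPat k (fun t => x ⟨(ℓ + t) % n, Nat.mod_lt _ hn⟩) ↔ matchesAt k hn x ℓ := by
  have hk0 : 0 < k := by omega
  have h8k : 8 * k ≤ n := hnk ▸ Nat.mul_le_mul_right k h8
  have hkk1 : (k - 1) * k = k * k - k := by rw [Nat.sub_mul, one_mul]
  constructor
  · rintro ⟨h1, h2, h3⟩ m ⟨hmn, hcase⟩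
    by_cases hmk : m < k
    · have h : x ⟨(ℓ + m) % n, Nat.mod_lt _ hn⟩ = decide (m < 2) := h1 m hmk
      rw [h, patB_of_lt h8 hnk hmk]
    · by_cases hm5 : m % k < 5
      · have hj1 : 1 ≤ m / k := (Nat.one_le_div_iff hk0).mpr (le_of_not_gt hmk)
        have hjk : m / k < k := Nat.div_lt_of_lt_mul (by omega : m < k * k)
        have hrw : m / k * k + m % k = m := by
          rw [Nat.mul_comm]; exact Nat.div_add_mod m k
        have h : x ⟨(ℓ + (m / k * k + m % k)) % n, Nat.mod_lt _ hn⟩ = true :=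
          h2 (m / k) hj1 hjk (m % k) hm5
        rw [hrw] at h
        rw [h, patB_true_big (le_of_not_gt hmk) hm5]
      · have hm3 : n - 3 ≤ m := by
          rcases hcase with h | h | h
          · omega
          · exact absurd h hm5
          · exact h
        have ht1 : k - 3 ≤ m - (k - 1) * k := by omega
        have ht2 : m - (k - 1) * k < k := by omega
        have hrw : (k - 1) * k + (m - (k - 1) * k) = m := by omega
        have h : x ⟨(ℓ + ((k - 1) * k + (m - (k - 1) * k))) % n, Nat.mod_lt _ hn⟩ = true :=
          h3 (m - (k - 1) * k) ht1 ht2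
        rw [hrw] at h
        rw [h, patB_true_tail hm3 hmn]
  · intro hm
    refine ⟨?_, ?_, ?_⟩
    · intro t ht
      show x ⟨(ℓ + t) % n, Nat.mod_lt _ hn⟩ = decide (t < 2)
      rw [hm t ⟨by omega, Or.inl ht⟩, patB_of_lt h8 hnk ht]
    · intro j hj1 hjk t ht
      have hjkk : j * k ≤ (k - 1) * k := Nat.mul_le_mul_right k (by omega)
      have hlt : j * k + t < n := by omega
      have hmod : (j * k + t) % k = t := by
        rw [Nat.mul_add_mod', Nat.mod_eq_of_lt (by omega)]
      have hkm : k ≤ j * k + t := le_trans (Nat.le_mul_of_pos_left k hj1) (Nat.le_add_right _ _)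
      show x ⟨(ℓ + (j * k + t)) % n, Nat.mod_lt _ hn⟩ = true
      rw [hm (j * k + t) ⟨hlt, Or.inr (Or.inl (by omega))⟩]
      exact patB_true_big hkm (by omega)
    · intro t ht1 ht2
      have h1 : n - 3 ≤ (k - 1) * k + t := by omega
      have h2' : (k - 1) * k + t < n := by omega
      show x ⟨(ℓ + ((k - 1) * k + t)) % n, Nat.mod_lt _ hn⟩ = true
      rw [hm _ ⟨h2', Or.inr (Or.inr h1)⟩]
      exact patB_true_tail h1 h2'

lemma f_true_iff {k n : ℕ} (h8 : 8 ≤ k) (hnk : n = k * k) (hpos : 0 < n)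
    (x : Fin n → Bool) :
    cycPatFn k n hpos x = true ↔ ∃ ℓ, matchesAt k hpos x ℓ := by
  unfold cycPatFn
  simp only [decide_eq_true_eq]
  exact exists_congr fun ℓ => gpat_iff h8 hnk hpos x ℓ

lemma f_false_iff {k n : ℕ} (h8 : 8 ≤ k) (hnk : n = k * k) (hpos : 0 < n)
    (x : Fin n → Bool) :
    cycPatFn k n hpos x = false ↔ ∀ ℓ, ¬ matchesAt k hpos x ℓ := by
  rw [← Bool.not_eq_true, f_true_iff h8 hnk hpos x]
  push_neg
  rfl
lemma window3 {k : ℕ} (h8 : 8 ≤ k) (a : ℕ) :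
    ∃ m1 m2 m3 : ℕ, m1 ≠ m2 ∧ m1 ≠ m3 ∧ m2 ≠ m3 ∧
      (a ≤ m1 ∧ m1 ≤ a + (k - 3) ∧ m1 % k < 5) ∧
      (a ≤ m2 ∧ m2 ≤ a + (k - 3) ∧ m2 % k < 5) ∧
      (a ≤ m3 ∧ m3 ≤ a + (k - 3) ∧ m3 % k < 5) := by
  have hk0 : 0 < k := by omega
  set I : Finset ℕ := Finset.Icc a (a + (k - 3)) with hI
  set T : Finset ℕ := I.filter (fun m => m % k < 5) with hT
  suffices h : 2 < T.card by
    obtain ⟨m1, m2, m3, h1, h2, h3, h12, h13, h23⟩ := Finset.two_lt_card_iff.mp h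
    rw [hT, Finset.mem_filter, hI, Finset.mem_Icc] at h1 h2 h3
    exact ⟨m1, m2, m3, h12, h13, h23, ⟨h1.1.1, h1.1.2, h1.2⟩, ⟨h2.1.1, h2.1.2, h2.2⟩,
      ⟨h3.1.1, h3.1.2, h3.2⟩⟩
  have hIcard : I.card = k - 2 := by rw [hI, Nat.card_Icc]; omega
  have key : ∀ p q : ℕ, p ∈ I → q ∈ I → p ≤ q → p % k = q % k → p = q := by
    intro p q hp hq hpq he
    rw [hI, Finset.mem_Icc] at hp hq
    have hdvd : k ∣ q - p := (Nat.modEq_iff_dvd' hpq).mp he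
    obtain ⟨c, hc⟩ := hdvd
    rcases Nat.eq_zero_or_pos c with rfl | hcpos
    · omega
    · have : k ≤ k * c := Nat.le_mul_of_pos_right k hcpos
      omega
  have hinj : Set.InjOn (fun m => m % k) I := by
    intro p hp q hq he
    rcases le_total p q with h | h
    · exact key p q hp hq h he
    · exact (key q p hq hp h he.symm).symm
  set J : Finset ℕ := I.image (fun m => m % k) with hJ
  have hJcard : J.card = k - 2 := by rw [hJ, Finset.card_image_of_injOn hinj, hIcard]
  have hJsub : J ⊆ Finset.range k := by
    intro y hy
    rw [hJ, Finset.mem_image] at hy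
    obtain ⟨m, _, rfl⟩ := hy
    exact Finset.mem_range.mpr (Nat.mod_lt _ hk0)
  have h52 : (Finset.range 5 ∩ J).card + (Finset.range 5 \ J).card = 5 := by
    rw [Finset.card_inter_add_card_sdiff, Finset.card_range]
  have hsub2 : Finset.range 5 \ J ⊆ Finset.range k \ J := by
    apply Finset.sdiff_subset_sdiff _ le_rfl
    intro y hy
    rw [Finset.mem_range] at hy ⊢
    omega
  have hcard_sdiff : (Finset.range k \ J).card = k - (k - 2) := by
    rw [Finset.card_sdiff_of_subset hJsub, Finset.card_range, hJcard]
  have h3 : 3 ≤ (Finset.range 5 ∩ J).card := by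
    have := Finset.card_le_card hsub2
    omega
  have hTim : Finset.range 5 ∩ J ⊆ T.image (fun m => m % k) := by
    intro y hy
    rw [Finset.mem_inter, Finset.mem_range] at hy
    obtain ⟨hy5, hyJ⟩ := hy
    rw [hJ, Finset.mem_image] at hyJ
    obtain ⟨m, hmI, rfl⟩ := hyJ
    exact Finset.mem_image.mpr ⟨m, Finset.mem_filter.mpr ⟨hmI, hy5⟩, rfl⟩
  have := Finset.card_le_card hTim
  have := Finset.card_image_le (s := T) (f := fun m => m % k)
  omega

/-- Both-orientation constructor for conflicts. -/
lemma conf_mk {k n : ℕ} (h8 : 8 ≤ k) (hnk : n = k * k) {d m r : ℕ}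
    (hmod : (m + d) % n = r)
    (h : (2 ≤ m ∧ m < k ∧ ((r < 2) ∨ (k ≤ r ∧ r % k < 5)) ∧ r < n) ∨
         (((m < 2) ∨ (k ≤ m ∧ m % k < 5)) ∧ m < n ∧ 2 ≤ r ∧ r < k)) :
    Conf k n d m := by
  have h8k : 8 * k ≤ n := hnk ▸ Nat.mul_le_mul_right k h8
  rcases h with ⟨h2, hmk, hr, hrn⟩ | ⟨hm, hmn, hr2, hrk⟩
  · refine ⟨⟨by omega, Or.inl hmk⟩, ?_, ?_⟩
    · rw [hmod]
      rcases hr with h | ⟨h, h'⟩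
      · exact ⟨hrn, Or.inl (by omega)⟩
      · exact ⟨hrn, Or.inr (Or.inl h')⟩
    · rw [hmod, patB_false_mid h8 hnk h2 hmk]
      rcases hr with h | ⟨h, h'⟩
      · rw [patB_true_small h]; simp
      · rw [patB_true_big h h']; simp
  · refine ⟨⟨hmn, ?_⟩, ?_, ?_⟩
    · rcases hm with h | ⟨h, h'⟩
      · exact Or.inl (by omega)
      · exact Or.inr (Or.inl h')
    · rw [hmod]
      exact ⟨by omega, Or.inl hrk⟩
    · rw [hmod, patB_false_mid h8 hnk hr2 hrk]
      rcases hm with h | ⟨h, h'⟩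
      · rw [patB_true_small h]; simp
      · rw [patB_true_big h h']; simp

lemma main3 {k n : ℕ} (h8 : 8 ≤ k) (hnk : n = k * k) (d : ℕ) (hd2 : 2 ≤ d) (hd2' : d ≤ n - 2) :
    ∃ a b c : ℕ, a ≠ b ∧ a ≠ c ∧ b ≠ c ∧ Conf k n d a ∧ Conf k n d b ∧ Conf k n d c := by
  have hk0 : 0 < k := by omega
  have h8k : 8 * k ≤ n := hnk ▸ Nat.mul_le_mul_right k h8
  have hmodself : k % k = 0 := Nat.mod_self k
  have hmod1 : (k + 1) % k = 1 := by rw [Nat.add_mod_left]; exact Nat.mod_eq_of_lt (by omega)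
  have hmod2 : (k + 2) % k = 2 := by rw [Nat.add_mod_left]; exact Nat.mod_eq_of_lt (by omega)
  by_cases hde2 : d = 2
  · subst hde2
    refine ⟨0, 1, k - 2, by omega, by omega, by omega, ?_, ?_, ?_⟩
    · exact conf_mk h8 hnk (show (0 + 2) % n = 2 from Nat.mod_eq_of_lt (by omega))
        (Or.inr ⟨Or.inl (by omega), by omega, by omega, by omega⟩)
    · exact conf_mk h8 hnk (show (1 + 2) % n = 3 from Nat.mod_eq_of_lt (by omega))
        (Or.inr ⟨Or.inl (by omega), by omega, by omega, by omega⟩)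
    · exact conf_mk h8 hnk
        (show (k - 2 + 2) % n = k from by
          rw [show k - 2 + 2 = k from by omega]; exact Nat.mod_eq_of_lt (by omega))
        (Or.inl ⟨by omega, by omega, Or.inr ⟨le_rfl, by omega⟩, by omega⟩)
  by_cases hdk : d ≤ k - 3
  · -- 3 ≤ d ≤ k - 3 : witnesses k-d, k-d+1, k-d+2
    refine ⟨k - d, k - d + 1, k - d + 2, by omega, by omega, by omega, ?_, ?_, ?_⟩
    · exact conf_mk h8 hnk
        (show (k - d + d) % n = k from by
          rw [show k - d + d = k from by omega]; exact Nat.mod_eq_of_lt (by omega))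
        (Or.inl ⟨by omega, by omega, Or.inr ⟨le_rfl, by omega⟩, by omega⟩)
    · exact conf_mk h8 hnk
        (show (k - d + 1 + d) % n = k + 1 from by
          rw [show k - d + 1 + d = k + 1 from by omega]; exact Nat.mod_eq_of_lt (by omega))
        (Or.inl ⟨by omega, by omega, Or.inr ⟨by omega, by omega⟩, by omega⟩)
    · exact conf_mk h8 hnk
        (show (k - d + 2 + d) % n = k + 2 from by
          rw [show k - d + 2 + d = k + 2 from by omega]; exact Nat.mod_eq_of_lt (by omega))
        (Or.inl ⟨by omega, by omega, Or.inr ⟨by omega, by omega⟩, by omega⟩)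
  by_cases hdm : d ≤ n - k - 1
  · -- k - 2 ≤ d ≤ n - k - 1 : window at 2 + d
    obtain ⟨m1, m2, m3, h12, h13, h23, hw1, hw2, hw3⟩ := window3 h8 (2 + d)
    have mk3 : ∀ m : ℕ, 2 + d ≤ m → m ≤ 2 + d + (k - 3) → m % k < 5 → Conf k n d (m - d) := by
      intro m hm1 hm2 hm5
      exact conf_mk h8 hnk
        (show (m - d + d) % n = m from by
          rw [show m - d + d = m from by omega]; exact Nat.mod_eq_of_lt (by omega))
        (Or.inl ⟨by omega, by omega, Or.inr ⟨by omega, hm5⟩, by omega⟩)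
    exact ⟨m1 - d, m2 - d, m3 - d, by omega, by omega, by omega,
      mk3 m1 hw1.1 hw1.2.1 hw1.2.2, mk3 m2 hw2.1 hw2.2.1 hw2.2.2, mk3 m3 hw3.1 hw3.2.1 hw3.2.2⟩
  by_cases he2 : n - d = 2
  · -- d = n - 2 : witnesses 2, 3, k
    refine ⟨2, 3, k, by omega, by omega, by omega, ?_, ?_, ?_⟩
    · exact conf_mk h8 hnk (mod_eq_wrap (show 2 + d = n + 0 from by omega) (by omega))
        (Or.inl ⟨by omega, by omega, Or.inl (by omega), by omega⟩)
    · exact conf_mk h8 hnk (mod_eq_wrap (show 3 + d = n + 1 from by omega) (by omega))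
        (Or.inl ⟨by omega, by omega, Or.inl (by omega), by omega⟩)
    · exact conf_mk h8 hnk (mod_eq_wrap (show k + d = n + (k - 2) from by omega) (by omega))
        (Or.inr ⟨Or.inr ⟨le_rfl, by omega⟩, by omega, by omega, by omega⟩)
  by_cases hek : n - d ≤ k - 3
  · -- 3 ≤ e ≤ k - 3 : witnesses k, k+1, k+2
    refine ⟨k, k + 1, k + 2, by omega, by omega, by omega, ?_, ?_, ?_⟩
    · exact conf_mk h8 hnk
        (mod_eq_wrap (show k + d = n + (k - (n - d)) from by omega) (by omega))
        (Or.inr ⟨Or.inr ⟨le_rfl, by omega⟩, by omega, by omega, by omega⟩)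
    · exact conf_mk h8 hnk
        (mod_eq_wrap (show k + 1 + d = n + (k + 1 - (n - d)) from by omega) (by omega))
        (Or.inr ⟨Or.inr ⟨by omega, by omega⟩, by omega, by omega, by omega⟩)
    · exact conf_mk h8 hnk
        (mod_eq_wrap (show k + 2 + d = n + (k + 2 - (n - d)) from by omega) (by omega))
        (Or.inr ⟨Or.inr ⟨by omega, by omega⟩, by omega, by omega, by omega⟩)
  · -- k - 2 ≤ e ≤ k : window at 2 + e, witnesses are the window elements themselves
    obtain ⟨m1, m2, m3, h12, h13, h23, hw1, hw2, hw3⟩ := window3 h8 (2 + (n - d))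
    have mk3 : ∀ m : ℕ, 2 + (n - d) ≤ m → m ≤ 2 + (n - d) + (k - 3) → m % k < 5 →
        Conf k n d m := by
      intro m hm1 hm2 hm5
      exact conf_mk h8 hnk
        (mod_eq_wrap (show m + d = n + (m - (n - d)) from by omega) (by omega))
        (Or.inr ⟨Or.inr ⟨by omega, hm5⟩, by omega, by omega, by omega⟩)
    exact ⟨m1, m2, m3, h12, h13, h23,
      mk3 m1 hw1.1 hw1.2.1 hw1.2.2, mk3 m2 hw2.1 hw2.2.1 hw2.2.2, mk3 m3 hw3.1 hw3.2.1 hw3.2.2⟩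
lemma get_struct {k n : ℕ} (h8 : 8 ≤ k) (hnk : n = k * k) (hpos : 0 < n)
    (x : Fin n → Bool) (hx : cycPatFn k n hpos x = false) (i : Fin n)
    (hi : cycPatFn k n hpos (flipBit x i) = true) :
    ∃ ℓ, ℓ < n ∧ ∃ m₀, MStruct k hpos x ℓ m₀ i := by
  obtain ⟨ℓ0, hℓ0⟩ := (f_true_iff h8 hnk hpos _).mp hi
  have hℓ : matchesAt k hpos (flipBit x i) (ℓ0 % n) := by
    intro m hm
    have h := hℓ0 m hm
    have hv : (ℓ0 % n + m) % n = (ℓ0 + m) % n := Nat.mod_add_mod ℓ0 n m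
    rwa [show (⟨(ℓ0 % n + m) % n, Nat.mod_lt _ hpos⟩ : Fin n)
        = ⟨(ℓ0 + m) % n, Nat.mod_lt _ hpos⟩ from Fin.ext hv]
  set ℓ := ℓ0 % n with hℓdef
  have hnm := (f_false_iff h8 hnk hpos x).mp hx ℓ
  have hex : ∃ m₀, inD k n m₀ ∧ x ⟨(ℓ + m₀) % n, Nat.mod_lt _ hpos⟩ ≠ patB k n m₀ := by
    by_contra h
    push_neg at h
    exact hnm fun m hm => h m hm
  obtain ⟨m₀, hm₀, hneq⟩ := hex
  have hposeq : (⟨(ℓ + m₀) % n, Nat.mod_lt _ hpos⟩ : Fin n) = i := by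
    by_contra hne
    have h : flipBit x i ⟨(ℓ + m₀) % n, Nat.mod_lt _ hpos⟩ = patB k n m₀ := hℓ m₀ hm₀
    simp only [flipBit] at h
    rw [if_neg hne] at h
    exact hneq h
  refine ⟨ℓ, Nat.mod_lt _ hpos, m₀, hm₀, congrArg Fin.val hposeq, ?_, ?_⟩
  · have h : flipBit x i ⟨(ℓ + m₀) % n, Nat.mod_lt _ hpos⟩ = patB k n m₀ := hℓ m₀ hm₀
    rw [hposeq] at h
    simpa [flipBit] using h
  · intro m hm hne
    have h : flipBit x i ⟨(ℓ + m) % n, Nat.mod_lt _ hpos⟩ = patB k n m := hℓ m hm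
    have hne2 : (⟨(ℓ + m) % n, Nat.mod_lt _ hpos⟩ : Fin n) ≠ i := by
      intro he
      apply hne
      have hv1 : (ℓ + m) % n = i.val := congrArg Fin.val he
      have hv2 : (ℓ + m₀) % n = i.val := congrArg Fin.val hposeq
      exact add_mod_cancel_left' hpos hm.1 hm₀.1 (hv1.trans hv2.symm)
    simp only [flipBit] at h
    rw [if_neg hne2] at h
    exact h

lemma no_two {k n : ℕ} (hpos : 0 < n) (x : Fin n → Bool) (ℓ ma mb : ℕ)
    (ia ib : Fin n) (hne : ia ≠ ib)
    (hsa : MStruct k hpos x ℓ ma ia) (hsb : MStruct k hpos x ℓ mb ib) : False := by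
  obtain ⟨hma, hpa, hxa, hresta⟩ := hsa
  obtain ⟨hmb, hpb, hxb, _⟩ := hsb
  have hmab : ma ≠ mb := by
    intro h
    apply hne
    apply Fin.ext
    rw [← hpa, ← hpb, h]
  have h := hresta mb hmb fun h => hmab h.symm
  rw [show (⟨(ℓ + mb) % n, Nat.mod_lt _ hpos⟩ : Fin n) = ib from Fin.ext hpb] at h
  have := hxb.symm.trans h
  simp at this

lemma contra_pair {k n : ℕ} (h8 : 8 ≤ k) (hnk : n = k * k) (hpos : 0 < n)
    (x : Fin n → Bool) (ℓs ℓr ms mr : ℕ) (is ir : Fin n)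
    (hs : MStruct k hpos x ℓs ms is) (hr : MStruct k hpos x ℓr mr ir)
    (hlt : ℓs < ℓr) (hg2 : 2 ≤ ℓr - ℓs) (hg2' : ℓr - ℓs ≤ n - 2) : False := by
  obtain ⟨hms, hpvs, hxs, hrests⟩ := hs
  obtain ⟨hmr, hpvr, hxr, hrestr⟩ := hr
  set d := ℓr - ℓs with hd
  obtain ⟨a, b, c, hab, hac, hbc, Ca, Cb, Cc⟩ := main3 h8 hnk d hg2 hg2'
  set w := (ms + (n - d)) % n with hw
  have hwn : w < n := Nat.mod_lt _ hpos
  have hwd : (w + d) % n = ms := by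
    rw [hw, Nat.mod_add_mod]
    rw [show ms + (n - d) + d = ms + n from by omega, Nat.add_mod_right]
    exact Nat.mod_eq_of_lt hms.1
  have budget : ∀ m, Conf k n d m → m = mr ∨ m = w := by
    rintro m ⟨hm, hm', hne⟩
    by_contra hcon
    push_neg at hcon
    have e1 : x ⟨(ℓr + m) % n, Nat.mod_lt _ hpos⟩ = patB k n m := hrestr m hm hcon.1
    have hm's : (m + d) % n ≠ ms := by
      intro he
      apply hcon.2
      apply add_mod_cancel_right' hpos hm.1 hwn
      rw [he, hwd]
    have e2 : x ⟨(ℓs + (m + d) % n) % n, Nat.mod_lt _ hpos⟩ = patB k n ((m + d) % n) :=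
      hrests _ hm' hm's
    have hposeq : (ℓs + (m + d) % n) % n = (ℓr + m) % n := by
      rw [Nat.add_mod_mod]
      congr 1
      omega
    rw [show (⟨(ℓs + (m + d) % n) % n, Nat.mod_lt _ hpos⟩ : Fin n)
        = ⟨(ℓr + m) % n, Nat.mod_lt _ hpos⟩ from Fin.ext hposeq] at e2
    exact hne (by rw [← e1, e2])
  have ha' := budget a Ca
  have hb' := budget b Cb
  have hc' := budget c Cc
  omega

lemma sens0_le {k n : ℕ} (h8 : 8 ≤ k) (hnk : n = k * k) (hpos : 0 < n) :
    sens0 (cycPatFn k n hpos) ≤ 2 := by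
  apply Finset.sup_le
  intro x hx
  have hfx : cycPatFn k n hpos x = false := (Finset.mem_filter.mp hx).2
  by_contra hgt
  push_neg at hgt
  obtain ⟨i1, i2, i3, h1, h2, h3, h12, h13, h23⟩ := Finset.two_lt_card_iff.mp hgt
  have flip_true : ∀ i : Fin n,
      i ∈ Finset.univ.filter
        (fun i => cycPatFn k n hpos (flipBit x i) ≠ cycPatFn k n hpos x) →
      cycPatFn k n hpos (flipBit x i) = true := by
    intro i hi
    have h := (Finset.mem_filter.mp hi).2
    rw [hfx] at h
    cases hb : cycPatFn k n hpos (flipBit x i)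
    · exact absurd hb h
    · rfl
  obtain ⟨ℓ1, hℓ1n, m1, hst1⟩ := get_struct h8 hnk hpos x hfx i1 (flip_true _ h1)
  obtain ⟨ℓ2, hℓ2n, m2, hst2⟩ := get_struct h8 hnk hpos x hfx i2 (flip_true _ h2)
  obtain ⟨ℓ3, hℓ3n, m3, hst3⟩ := get_struct h8 hnk hpos x hfx i3 (flip_true _ h3)
  have hd12 : ℓ1 ≠ ℓ2 := fun h => no_two hpos x ℓ1 m1 m2 i1 i2 h12 hst1 (h ▸ hst2)
  have hd13 : ℓ1 ≠ ℓ3 := fun h => no_two hpos x ℓ1 m1 m3 i1 i3 h13 hst1 (h ▸ hst3)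
  have hd23 : ℓ2 ≠ ℓ3 := fun h => no_two hpos x ℓ2 m2 m3 i2 i3 h23 hst2 (h ▸ hst3)
  have h64 : 64 ≤ n := by
    have := Nat.mul_le_mul h8 h8
    omega
  have hchoice :
      (ℓ1 < ℓ2 ∧ 2 ≤ ℓ2 - ℓ1 ∧ ℓ2 - ℓ1 ≤ n - 2) ∨
      (ℓ2 < ℓ1 ∧ 2 ≤ ℓ1 - ℓ2 ∧ ℓ1 - ℓ2 ≤ n - 2) ∨
      (ℓ1 < ℓ3 ∧ 2 ≤ ℓ3 - ℓ1 ∧ ℓ3 - ℓ1 ≤ n - 2) ∨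
      (ℓ3 < ℓ1 ∧ 2 ≤ ℓ1 - ℓ3 ∧ ℓ1 - ℓ3 ≤ n - 2) ∨
      (ℓ2 < ℓ3 ∧ 2 ≤ ℓ3 - ℓ2 ∧ ℓ3 - ℓ2 ≤ n - 2) ∨
      (ℓ3 < ℓ2 ∧ 2 ≤ ℓ2 - ℓ3 ∧ ℓ2 - ℓ3 ≤ n - 2) := by
    omega
  rcases hchoice with ⟨h, h', h''⟩ | ⟨h, h', h''⟩ | ⟨h, h', h''⟩ | ⟨h, h', h''⟩ |
    ⟨h, h', h''⟩ | ⟨h, h', h''⟩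
  · exact contra_pair h8 hnk hpos x ℓ1 ℓ2 m1 m2 i1 i2 hst1 hst2 h h' h''
  · exact contra_pair h8 hnk hpos x ℓ2 ℓ1 m2 m1 i2 i1 hst2 hst1 h h' h''
  · exact contra_pair h8 hnk hpos x ℓ1 ℓ3 m1 m3 i1 i3 hst1 hst3 h h' h''
  · exact contra_pair h8 hnk hpos x ℓ3 ℓ1 m3 m1 i3 i1 hst3 hst1 h h' h''
  · exact contra_pair h8 hnk hpos x ℓ2 ℓ3 m2 m3 i2 i3 hst2 hst3 h h' h''
  · exact contra_pair h8 hnk hpos x ℓ3 ℓ2 m3 m2 i3 i2 hst3 hst2 h h' h''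
lemma ones_card_le {k n : ℕ} (h8 : 8 ≤ k) (hnk : n = k * k) (hpos : 0 < n)
    (y : Fin n → Bool) (ℓ : ℕ) (h : matchesAt k hpos y ℓ) :
    ((Finset.range n).filter fun m => patB k n m = true).card ≤
      (Finset.univ.filter fun p : Fin n => y p = true).card := by
  apply Finset.card_le_card_of_injOn (fun m => (⟨(ℓ + m) % n, Nat.mod_lt _ hpos⟩ : Fin n))
  · intro m hm
    simp only [Finset.mem_coe, Finset.mem_filter, Finset.mem_range] at hm
    have hin : inD k n m := inD_of_patB h8 hnk hm.1 hm.2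
    simp only [Finset.mem_coe, Finset.mem_filter, Finset.mem_univ, true_and]
    rw [h m hin]
    exact hm.2
  · intro m1 h1 m2 h2 he
    simp only [Finset.coe_filter, Set.mem_setOf_eq, Finset.mem_range] at h1 h2
    have hv : (ℓ + m1) % n = (ℓ + m2) % n := congrArg Fin.val he
    exact add_mod_cancel_left' hpos h1.1 h2.1 hv

lemma ones_card_eq {k n : ℕ} :
    (Finset.univ.filter fun p : Fin n => patB k n p.val = true).card
      = ((Finset.range n).filter fun m => patB k n m = true).card := by
  apply Finset.card_bij (fun p _ => p.val)
  · intro p hp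
    simp only [Finset.mem_filter, Finset.mem_univ, true_and] at hp
    exact Finset.mem_filter.mpr ⟨Finset.mem_range.mpr p.isLt, hp⟩
  · intro p _ q _ he
    exact Fin.ext he
  · intro m hm
    simp only [Finset.mem_filter, Finset.mem_range] at hm
    exact ⟨⟨m, hm.1⟩, by simp [hm.2], rfl⟩

lemma flip_false {k n : ℕ} (h8 : 8 ≤ k) (hnk : n = k * k) (hpos : 0 < n)
    (i : Fin n) (hi : patB k n i.val = true) :
    cycPatFn k n hpos (flipBit (fun p : Fin n => patB k n p.val) i) = false := by
  rw [f_false_iff h8 hnk hpos]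
  intro ℓ hℓ
  have h1 := ones_card_le h8 hnk hpos _ ℓ hℓ
  have h2 : (Finset.univ.filter fun p : Fin n =>
        (flipBit (fun p : Fin n => patB k n p.val) i) p = true)
      = (Finset.univ.filter fun p : Fin n => patB k n p.val = true).erase i := by
    ext p
    simp only [Finset.mem_filter, Finset.mem_univ, true_and, Finset.mem_erase, flipBit]
    by_cases hp : p = i
    · subst hp
      simp [hi]
    · simp [hp]
  rw [h2, Finset.card_erase_of_mem (by simp [hi])] at h1
  have h3 : 0 < ((Finset.range n).filter fun m => patB k n m = true).card :=
    Finset.card_pos.mpr ⟨i.val, by simp [i.isLt, hi]⟩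
  have h4 := ones_card_eq (k := k) (n := n)
  omega

lemma xstar_true {k n : ℕ} (h8 : 8 ≤ k) (hnk : n = k * k) (hpos : 0 < n) :
    cycPatFn k n hpos (fun p : Fin n => patB k n p.val) = true := by
  rw [f_true_iff h8 hnk hpos]
  refine ⟨0, fun m hm => ?_⟩
  show patB k n ((0 + m) % n) = patB k n m
  rw [Nat.zero_add, Nat.mod_eq_of_lt hm.1]

lemma sens1_ge {k n : ℕ} (h8 : 8 ≤ k) (hnk : n = k * k) (hpos : 0 < n) :
    k ≤ sens1 (cycPatFn k n hpos) := by
  have hk0 : 0 < k := by omega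
  have h8k : 8 * k ≤ n := hnk ▸ Nat.mul_le_mul_right k h8
  set f := cycPatFn k n hpos with hf
  set xs : Fin n → Bool := fun p => patB k n p.val with hxs
  have hfx : f xs = true := xstar_true h8 hnk hpos
  set g : ℕ → Fin n := fun j => (⟨(j * k) % n, Nat.mod_lt _ hpos⟩ : Fin n) with hg
  have hjlt : ∀ j, j < k → j * k < n := by
    intro j hj
    have hexp : (j + 1) * k = j * k + k := by ring
    have := Nat.mul_le_mul_right k (show j + 1 ≤ k from hj)
    omega
  have hsub : (Finset.range k).image g
      ⊆ Finset.univ.filter fun i => f (flipBit xs i) ≠ f xs := by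
    intro i hi
    obtain ⟨j, hj, rfl⟩ := Finset.mem_image.mp hi
    rw [Finset.mem_range] at hj
    have hmod : (j * k) % n = j * k := Nat.mod_eq_of_lt (hjlt j hj)
    have hpat : patB k n ((g j).val) = true := by
      show patB k n ((j * k) % n) = true
      rw [hmod]
      rcases Nat.eq_zero_or_pos j with rfl | hj0
      · exact patB_true_small (by omega)
      · exact patB_true_big (Nat.le_mul_of_pos_left k hj0) (by rw [Nat.mul_mod_left]; omega)
    have hflip : f (flipBit xs (g j)) = false := flip_false h8 hnk hpos _ hpat
    simp only [Finset.mem_filter, Finset.mem_univ, true_and]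
    rw [hflip, hfx]
    simp
  have hcard : ((Finset.range k).image g).card = k := by
    rw [Finset.card_image_of_injOn, Finset.card_range]
    intro a ha b hb he
    simp only [Finset.coe_range, Set.mem_Iio] at ha hb
    have hv : (a * k) % n = (b * k) % n := congrArg Fin.val he
    rw [Nat.mod_eq_of_lt (hjlt a ha), Nat.mod_eq_of_lt (hjlt b hb)] at hv
    exact Nat.eq_of_mul_eq_mul_right hk0 hv
  calc k = ((Finset.range k).image g).card := hcard.symm
    _ ≤ (Finset.univ.filter fun i => f (flipBit xs i) ≠ f xs).card := Finset.card_le_card hsub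
    _ = sensAt f xs := rfl
    _ ≤ sens1 f := Finset.le_sup (Finset.mem_filter.mpr ⟨Finset.mem_univ _, hfx⟩)

lemma sens1_le {k n : ℕ} (h8 : 8 ≤ k) (hnk : n = k * k) (hpos : 0 < n) :
    sens1 (cycPatFn k n hpos) ≤ 7 * k := by
  have hk0 : 0 < k := by omega
  have h8k : 8 * k ≤ n := hnk ▸ Nat.mul_le_mul_right k h8
  apply Finset.sup_le
  intro x hx
  have hfx : cycPatFn k n hpos x = true := (Finset.mem_filter.mp hx).2
  obtain ⟨ℓ, hℓ⟩ := (f_true_iff h8 hnk hpos x).mp hfx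
  set Dset : Finset ℕ := (Finset.range n).filter (fun m => inD k n m) with hD
  have hsub : (Finset.univ.filter fun i =>
        cycPatFn k n hpos (flipBit x i) ≠ cycPatFn k n hpos x)
      ⊆ Dset.image (fun m => (⟨(ℓ + m) % n, Nat.mod_lt _ hpos⟩ : Fin n)) := by
    intro i hi
    simp only [Finset.mem_filter, Finset.mem_univ, true_and] at hi
    by_contra hni
    apply hi
    rw [hfx, f_true_iff h8 hnk hpos]
    refine ⟨ℓ, fun m hm => ?_⟩
    have hne : (⟨(ℓ + m) % n, Nat.mod_lt _ hpos⟩ : Fin n) ≠ i := by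
      intro he
      exact hni (Finset.mem_image.mpr ⟨m,
        Finset.mem_filter.mpr ⟨Finset.mem_range.mpr hm.1, hm⟩, he⟩)
    show flipBit x i _ = _
    simp only [flipBit]
    rw [if_neg hne]
    exact hℓ m hm
  have h1 : sensAt (cycPatFn k n hpos) x ≤ Dset.card :=
    le_trans (Finset.card_le_card hsub) Finset.card_image_le
  have h2 : Dset ⊆ (Finset.range k ∪ (Finset.range n).filter (fun m => m % k < 5))
      ∪ Finset.Icc (n - 3) (n - 1) := by
    intro m hm
    rw [hD, Finset.mem_filter, Finset.mem_range] at hm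
    obtain ⟨hmn, _, hc⟩ := hm
    simp only [Finset.mem_union, Finset.mem_range, Finset.mem_filter, Finset.mem_Icc]
    rcases hc with h | h | h
    · exact Or.inl (Or.inl h)
    · exact Or.inl (Or.inr ⟨hmn, h⟩)
    · exact Or.inr ⟨h, by omega⟩
  have h3 : ((Finset.range n).filter (fun m => m % k < 5)).card ≤ 5 * k := by
    have hle := Finset.card_le_card_of_injOn
      (s := (Finset.range n).filter (fun m => m % k < 5)) (t := Finset.range k ×ˢ Finset.range 5)
      (fun m => (m / k, m % k)) ?_ ?_
    · rw [Finset.card_product, Finset.card_range, Finset.card_range] at hle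
      omega
    · intro m hm
      rw [Finset.mem_coe, Finset.mem_filter, Finset.mem_range] at hm
      refine Finset.mem_coe.mpr (Finset.mem_product.mpr ⟨?_, ?_⟩)
      · exact Finset.mem_range.mpr (Nat.div_lt_of_lt_mul (by omega : m < k * k))
      · exact Finset.mem_range.mpr hm.2
    · intro m1 _ m2 _ he
      rw [Prod.mk.injEq] at he
      have e1 := Nat.div_add_mod m1 k
      have e2 := Nat.div_add_mod m2 k
      rw [he.1, he.2] at e1
      omega
  have h4 := Finset.card_union_le
    (Finset.range k ∪ (Finset.range n).filter (fun m => m % k < 5))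
    (Finset.Icc (n - 3) (n - 1))
  have h5 := Finset.card_union_le (Finset.range k)
    ((Finset.range n).filter (fun m => m % k < 5))
  have h6 : (Finset.Icc (n - 3) (n - 1)).card = 3 := by
    rw [Nat.card_Icc]
    omega
  have h7 := Finset.card_le_card h2
  rw [Finset.card_range] at h5
  omega

lemma sens0_ge {k n : ℕ} (h8 : 8 ≤ k) (hnk : n = k * k) (hpos : 0 < n) :
    1 ≤ sens0 (cycPatFn k n hpos) := by
  set xs : Fin n → Bool := fun p => patB k n p.val with hxs
  set i0 : Fin n := ⟨0, hpos⟩ with hi0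
  have hpat : patB k n i0.val = true := patB_true_small (by simp [hi0])
  have hx0 : cycPatFn k n hpos (flipBit xs i0) = false := flip_false h8 hnk hpos i0 hpat
  have hdouble : flipBit (flipBit xs i0) i0 = xs := by
    funext j
    simp only [flipBit]
    by_cases hj : j = i0 <;> simp [hj]
  have hmem : i0 ∈ Finset.univ.filter (fun i =>
      cycPatFn k n hpos (flipBit (flipBit xs i0) i) ≠ cycPatFn k n hpos (flipBit xs i0)) := by
    simp only [Finset.mem_filter, Finset.mem_univ, true_and]
    rw [hdouble, xstar_true h8 hnk hpos, hx0]
    simp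
  have h1 : 1 ≤ sensAt (cycPatFn k n hpos) (flipBit xs i0) :=
    Finset.card_pos.mpr ⟨i0, hmem⟩
  exact le_trans h1 (Finset.le_sup (Finset.mem_filter.mpr ⟨Finset.mem_univ _, hx0⟩))
/-- With `n = k²` a perfect square (`k ≥ 8`), the cyclically invariant
pattern function satisfies `s⁰(f)·s¹(f) = Θ(√n)`. -/
theorem cycPatFn_sens0_mul_sens1_theta_sqrt :
    ∃ c₁ : ℝ, 0 < c₁ ∧ ∃ c₂ : ℝ, 0 < c₂ ∧
      ∀ (n k : ℕ) (h8 : 8 ≤ k) (hsq : n = k ^ 2) (hpos : 0 < n),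
        c₁ * Real.sqrt (n : ℝ) ≤
            (sens0 (cycPatFn k n hpos) : ℝ) * (sens1 (cycPatFn k n hpos) : ℝ) ∧
          (sens0 (cycPatFn k n hpos) : ℝ) * (sens1 (cycPatFn k n hpos) : ℝ) ≤
            c₂ * Real.sqrt (n : ℝ) := by
  refine ⟨1, one_pos, 14, by norm_num, ?_⟩
  intro n k h8 hsq hpos
  have hnk : n = k * k := by rw [hsq]; ring
  have hs0l : 1 ≤ sens0 (cycPatFn k n hpos) := sens0_ge h8 hnk hpos
  have hs0u : sens0 (cycPatFn k n hpos) ≤ 2 := sens0_le h8 hnk hpos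
  have hs1l : k ≤ sens1 (cycPatFn k n hpos) := sens1_ge h8 hnk hpos
  have hs1u : sens1 (cycPatFn k n hpos) ≤ 7 * k := sens1_le h8 hnk hpos
  have hsqrt : Real.sqrt (n : ℝ) = (k : ℝ) := by
    rw [hsq]
    push_cast
    exact Real.sqrt_sq (by positivity)
  constructor
  · rw [hsqrt, one_mul]
    have h : k ≤ sens0 (cycPatFn k n hpos) * sens1 (cycPatFn k n hpos) := by
      calc k = 1 * k := (one_mul k).symm
        _ ≤ _ := Nat.mul_le_mul hs0l hs1l
    exact_mod_cast h
  · rw [hsqrt]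
    have h : sens0 (cycPatFn k n hpos) * sens1 (cycPatFn k n hpos) ≤ 14 * k := by
      have := Nat.mul_le_mul hs0u hs1u
      omega
    exact_mod_cast h
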